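/- arXiv:2506.11983 — 2 statements merged into one kernel-verified Lean document; each statement's English description precedes it below -/
import Mathlib

section
/- Let A be a C*-algebra and z ∈ A. There exists w ∈ A such that z* = w (z z*)^{1/4}. Consequently, if I is a closed two-sided ideal of A and z z* ∈ I, then z* ∈ I and hence z* z ∈ I. -/
open scoped NNReal

section PolarAux

variable {A : Type*} [NonUnitalCStarAlgebra A] [PartialOrder A] [StarOrderedRing A]

private lemma nnnorm_le_of_abs_le' {x : ℝ} {c : ℝ≥0} (h : |x| ≤ c) : ‖x‖₊ ≤ c := by
  rwa [← NNReal.coe_le_coe, coe_nnnorm, Real.norm_eq_abs]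

private lemma polar_aux1 (z : A) (f : ℝ → ℝ) (hf : Continuous f) (hf0 : f 0 = 0)
    (c : ℝ≥0) (hb : ∀ t ∈ quasispectrum ℝ (z * star z), ‖f t * (t * f t)‖₊ ≤ c ^ 2) :
    ‖star z * cfcₙ f (z * star z)‖₊ ≤ c := by
  set a : A := z * star z with ha_def
  have ha : 0 ≤ a := mul_star_self_nonneg z
  have hsa : IsSelfAdjoint (cfcₙ f a) := cfcₙ_predicate f a
  have key : star (star z * cfcₙ f a) * (star z * cfcₙ f a)
      = cfcₙ (fun t => f t * (t * f t)) a := by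
    have e3 : cfcₙ (fun t : ℝ => t * f t) a = a * cfcₙ f a := by
      have h := cfcₙ_mul (id : ℝ → ℝ) f a (by fun_prop) rfl hf.continuousOn hf0
      simpa [cfcₙ_id ℝ a] using h
    rw [cfcₙ_mul f (fun t => t * f t) a hf.continuousOn hf0 (by fun_prop) (by simp), e3]
    rw [star_mul, star_star, hsa.star_eq]
    rw [ha_def]; noncomm_ring
  have h2 : ‖star z * cfcₙ f a‖₊ ^ 2 ≤ c ^ 2 := by
    rw [pow_two, ← CStarRing.nnnorm_star_mul_self, key]
    exact nnnorm_cfcₙ_le hb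
  exact le_of_pow_le_pow_left₀ two_ne_zero zero_le h2

private lemma polar_aux2 (z : A) (f : ℝ → ℝ) (hf : Continuous f) (hf0 : f 0 = 0)
    (c : ℝ≥0) (hb : ∀ t ∈ quasispectrum ℝ (z * star z), ‖t * (1 - f t) ^ 2‖₊ ≤ c ^ 2) :
    ‖star z * cfcₙ f (z * star z) - star z‖₊ ≤ c := by
  set a : A := z * star z with ha_def
  have ha : 0 ≤ a := mul_star_self_nonneg z
  have ha' : IsSelfAdjoint a := .of_nonneg ha
  have hsa : IsSelfAdjoint (cfcₙ f a) := cfcₙ_predicate f a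
  set b := cfcₙ f a with hb_def
  have e1 : cfcₙ (fun t : ℝ => f t * (t * f t)) a = b * (a * b) := by
    rw [cfcₙ_mul f (fun t => t * f t) a hf.continuousOn hf0 (by fun_prop) (by simp)]
    have h := cfcₙ_mul (id : ℝ → ℝ) f a (by fun_prop) rfl hf.continuousOn hf0
    simp only [← hb_def]
    congr 1
    simpa [cfcₙ_id ℝ a] using h
  have e2 : cfcₙ (fun t : ℝ => f t * t) a = b * a := by
    have h := cfcₙ_mul f (id : ℝ → ℝ) a hf.continuousOn hf0 (by fun_prop) rfl
    simpa [cfcₙ_id ℝ a] using h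
  have e3 : cfcₙ (fun t : ℝ => t * f t) a = a * b := by
    have h := cfcₙ_mul (id : ℝ → ℝ) f a (by fun_prop) rfl hf.continuousOn hf0
    simpa [cfcₙ_id ℝ a] using h
  have key : star (star z * b - star z) * (star z * b - star z)
      = cfcₙ (fun t => f t * (t * f t) - f t * t - t * f t + t) a := by
    rw [cfcₙ_add _ _ a (by fun_prop) (by simp [hf0]) (by fun_prop) rfl,
      cfcₙ_sub _ _ a (by fun_prop) (by simp [hf0]) (by fun_prop) (by simp [hf0]),
      cfcₙ_sub _ _ a (by fun_prop) (by simp [hf0]) (by fun_prop) (by simp [hf0]),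
      e1, e2, e3]
    rw [show (fun t : ℝ => t) = (id : ℝ → ℝ) from rfl, cfcₙ_id ℝ a]
    rw [star_sub, star_mul, star_star, hsa.star_eq, ha_def]
    noncomm_ring
  have hfun : (fun t : ℝ => f t * (t * f t) - f t * t - t * f t + t)
      = fun t : ℝ => t * (1 - f t) ^ 2 := by funext t; ring
  have h2 : ‖star z * b - star z‖₊ ^ 2 ≤ c ^ 2 := by
    rw [pow_two, ← CStarRing.nnnorm_star_mul_self, key, hfun]
    exact nnnorm_cfcₙ_le hb
  exact le_of_pow_le_pow_left₀ two_ne_zero zero_le h2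

/-- The core polynomial inequality for the Cauchy estimate. -/
private lemma polar_core (u s εa : ℝ) (hu : 0 ≤ u) (ha : 0 < εa) (hs : 0 < s)
    (has : εa ≤ s ^ 2) :
    u ^ 10 * (s ^ 2 - εa) ^ 2 ≤ s * ((u ^ 4 + εa) * (u ^ 4 + s ^ 2)) ^ 2 := by
  have h1 : (s ^ 2 - εa) ^ 2 ≤ s ^ 4 := by nlinarith
  have h2 : u ^ 2 * s ^ 3 ≤ (u ^ 4 + s ^ 2) ^ 2 := by
    nlinarith [sq_nonneg (u ^ 2 * s - s ^ 2), sq_nonneg (u ^ 2 * s), sq_nonneg u,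
      sq_nonneg (u ^ 2 - s)]
  have h3 : u ^ 8 ≤ (u ^ 4 + εa) ^ 2 := by nlinarith [pow_nonneg hu 4, sq_nonneg (u ^ 4)]
  calc u ^ 10 * (s ^ 2 - εa) ^ 2 ≤ u ^ 10 * s ^ 4 := by nlinarith [pow_nonneg hu 10]
    _ = u ^ 8 * (s * (u ^ 2 * s ^ 3)) := by ring
    _ ≤ u ^ 8 * (s * (u ^ 4 + s ^ 2) ^ 2) := by
        have := mul_le_mul_of_nonneg_left h2 hs.le
        nlinarith [pow_nonneg hu 8]
    _ ≤ (u ^ 4 + εa) ^ 2 * (s * (u ^ 4 + s ^ 2) ^ 2) := by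
        have hpos : 0 ≤ s * (u ^ 4 + s ^ 2) ^ 2 := by positivity
        exact mul_le_mul_of_nonneg_right h3 hpos
    _ = s * ((u ^ 4 + εa) * (u ^ 4 + s ^ 2)) ^ 2 := by ring

/-- Pointwise Cauchy estimate (directed version: `εa ≤ εb`). -/
private lemma polar_keyA' (εa εb δ t : ℝ) (ha : 0 < εa) (hab : εa ≤ εb) (hbδ : εb ≤ δ)
    (ht : 0 ≤ t) :
    t * (Real.sqrt (Real.sqrt t) ^ 3 / (max t 0 + εa)
        - Real.sqrt (Real.sqrt t) ^ 3 / (max t 0 + εb)) ^ 2 ≤ Real.sqrt δ := by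
  have hb : 0 < εb := lt_of_lt_of_le ha hab
  have hδ : 0 < δ := lt_of_lt_of_le hb hbδ
  set u := Real.sqrt (Real.sqrt t) with hu_def
  have hu : 0 ≤ u := Real.sqrt_nonneg _
  have hu4 : u ^ 4 = t := by
    have h1 : u ^ 2 = Real.sqrt t := Real.sq_sqrt (Real.sqrt_nonneg t)
    have h2 : Real.sqrt t ^ 2 = t := Real.sq_sqrt ht
    nlinarith [h1, h2]
  rw [max_eq_left ht]
  have hda : (0:ℝ) < t + εa := by linarith
  have hdb : (0:ℝ) < t + εb := by linarith
  have hdiff : u ^ 3 / (t + εa) - u ^ 3 / (t + εb)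
      = u ^ 3 * (εb - εa) / ((t + εa) * (t + εb)) := by
    field_simp
    ring
  rw [hdiff]
  set s := Real.sqrt εb with hs_def
  have hs : 0 < s := Real.sqrt_pos.mpr hb
  have hs2 : s ^ 2 = εb := Real.sq_sqrt hb.le
  have hsδ : s ≤ Real.sqrt δ := Real.sqrt_le_sqrt hbδ
  have hDpos : (0:ℝ) < ((t + εa) * (t + εb)) ^ 2 := by positivity
  rw [div_pow, ← mul_div_assoc]
  rw [div_le_iff₀ hDpos]
  calc t * (u ^ 3 * (εb - εa)) ^ 2 = u ^ 10 * (s ^ 2 - εa) ^ 2 := by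
        rw [hs2]; nlinarith [hu4]
    _ ≤ s * ((u ^ 4 + εa) * (u ^ 4 + s ^ 2)) ^ 2 := polar_core u s εa hu ha hs (by linarith [hs2])
    _ ≤ Real.sqrt δ * ((t + εa) * (t + εb)) ^ 2 := by
        rw [hu4, hs2]
        exact mul_le_mul_of_nonneg_right hsδ hDpos.le

private lemma polar_keyA (εa εb δ t : ℝ) (ha : 0 < εa) (hb : 0 < εb) (haδ : εa ≤ δ)
    (hbδ : εb ≤ δ) (ht : 0 ≤ t) :
    t * (Real.sqrt (Real.sqrt t) ^ 3 / (max t 0 + εa)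
        - Real.sqrt (Real.sqrt t) ^ 3 / (max t 0 + εb)) ^ 2 ≤ Real.sqrt δ := by
  rcases le_total εa εb with h | h
  · exact polar_keyA' εa εb δ t ha h hbδ ht
  · have := polar_keyA' εb εa δ t hb h haδ ht
    calc t * (Real.sqrt (Real.sqrt t) ^ 3 / (max t 0 + εa)
          - Real.sqrt (Real.sqrt t) ^ 3 / (max t 0 + εb)) ^ 2
        = t * (Real.sqrt (Real.sqrt t) ^ 3 / (max t 0 + εb)
          - Real.sqrt (Real.sqrt t) ^ 3 / (max t 0 + εa)) ^ 2 := by ring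
      _ ≤ Real.sqrt δ := this

/-- Pointwise limit estimate. -/
private lemma polar_keyB (ε t : ℝ) (he : 0 < ε) (ht : 0 ≤ t) :
    t * (1 - Real.sqrt (Real.sqrt t) ^ 3 / (max t 0 + ε) * Real.sqrt (Real.sqrt t)) ^ 2 ≤ ε := by
  set u := Real.sqrt (Real.sqrt t) with hu_def
  have hu : 0 ≤ u := Real.sqrt_nonneg _
  have hu4 : u ^ 4 = t := by
    have h1 : u ^ 2 = Real.sqrt t := Real.sq_sqrt (Real.sqrt_nonneg t)
    have h2 : Real.sqrt t ^ 2 = t := Real.sq_sqrt ht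
    nlinarith [h1, h2]
  rw [max_eq_left ht]
  have hd : (0:ℝ) < t + ε := by linarith
  have hmul : u ^ 3 * u = t := by nlinarith [hu4]
  have h1 : u ^ 3 / (t + ε) * u = t / (t + ε) := by
    rw [div_mul_eq_mul_div, hmul]
  rw [h1]
  have h2 : 1 - t / (t + ε) = ε / (t + ε) := by field_simp; ring
  rw [h2, div_pow, ← mul_div_assoc, div_le_iff₀ (by positivity)]
  nlinarith [sq_nonneg (t - ε), mul_nonneg ht he.le]

/-- Pointwise estimate for the ideal part. -/
private lemma polar_keyC (ε t : ℝ) (he : 0 < ε) (ht : 0 ≤ t) :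
    t * (1 - t * (max t 0 / (max t 0 + ε) ^ 2)) ^ 2 ≤ 2 * ε := by
  rw [max_eq_left ht]
  have hd : (0:ℝ) < t + ε := by linarith
  have h1 : 1 - t * (t / (t + ε) ^ 2) = (2 * t * ε + ε ^ 2) / (t + ε) ^ 2 := by
    field_simp
    ring
  rw [h1, div_pow, ← mul_div_assoc, div_le_iff₀ (by positivity)]
  have h2 : ε * (2 * t + ε) ≤ (t + ε) ^ 2 := by nlinarith
  have h3 : t * (2 * t + ε) ≤ 2 * (t + ε) ^ 2 := by nlinarith
  nlinarith [mul_le_mul h2 h3 (by nlinarith) (by positivity), he.le, mul_pos he he]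

end PolarAux

private lemma norm_le_of_nnnorm_le_toNNReal {A : Type*} [NonUnitalCStarAlgebra A]
    {x : A} {r : ℝ} (hr : 0 ≤ r) (h : ‖x‖₊ ≤ r.toNNReal) : ‖x‖ ≤ r := by
  calc ‖x‖ = (‖x‖₊ : ℝ) := (coe_nnnorm x).symm
    _ ≤ (r.toNNReal : ℝ) := by exact_mod_cast h
    _ = r := Real.coe_toNNReal r hr

/-- Polar-decomposition-type factorization: for any `z` in a C*-algebra `A` there is `w ∈ A`
with `z* = w (z z*)^{1/4}`.  Consequently, if `I` is a closed two-sided ideal and `z z* ∈ I`,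
then `z* ∈ I` and `z* z ∈ I`. -/
theorem polar_factorization_quarter_power
    (A : Type*) [NonUnitalCStarAlgebra A] [PartialOrder A] [StarOrderedRing A] (z : A) :
    (∃ w : A, star z = w * CFC.nnrpow (z * star z) (1/4 : ℝ≥0)) ∧
    ∀ I : TwoSidedIdeal A, IsClosed (I : Set A) → z * star z ∈ I →
      star z ∈ I ∧ star z * z ∈ I := by
  set a : A := z * star z with ha_def
  have ha : 0 ≤ a := mul_star_self_nonneg z
  have hσ : ∀ t ∈ quasispectrum ℝ a, (0:ℝ) ≤ t := quasispectrum_nonneg_of_nonneg a ha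
  -- the sequence of epsilons
  set εs : ℕ → ℝ := fun n => 1 / ((n : ℝ) + 1) with hεs_def
  have hεpos : ∀ n, 0 < εs n := fun n => by positivity
  have hεanti : ∀ {N n : ℕ}, N ≤ n → εs n ≤ εs N := by
    intro N n h
    apply one_div_le_one_div_of_le (by positivity)
    have : (N : ℝ) ≤ (n : ℝ) := Nat.cast_le.mpr h
    linarith
  have hεlim : Filter.Tendsto εs Filter.atTop (nhds 0) :=
    tendsto_one_div_add_atTop_nhds_zero_nat
  have hsqrt0 : Real.sqrt 0 = 0 := Real.sqrt_zero
  have hsqrtlim : ∀ {f : ℕ → ℝ}, Filter.Tendsto f Filter.atTop (nhds 0) →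
      Filter.Tendsto (fun n => Real.sqrt (f n)) Filter.atTop (nhds 0) := fun hf =>
    (Real.continuous_sqrt.tendsto' 0 0 hsqrt0).comp hf
  -- the functions
  set qf : ℝ → ℝ := fun t => Real.sqrt (Real.sqrt t) with hqf_def
  have hqfc : Continuous qf := Real.continuous_sqrt.comp Real.continuous_sqrt
  have hqf0 : qf 0 = 0 := by simp [hqf_def]
  set g : ℝ → ℝ → ℝ := fun ε t => qf t ^ 3 / (max t 0 + ε) with hg_def
  have hdenpos : ∀ (ε t : ℝ), 0 < ε → 0 < max t 0 + ε := fun ε t hε => by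
    have := le_max_right t 0
    linarith
  have hgc : ∀ ε : ℝ, 0 < ε → Continuous (g ε) := fun ε hε =>
    (hqfc.pow 3).div ((continuous_id.max continuous_const).add continuous_const)
      (fun t => (hdenpos ε t hε).ne')
  have hg0 : ∀ ε : ℝ, g ε 0 = 0 := fun ε => by simp [hg_def, hqf_def]
  -- the approximating sequence
  set W : ℕ → A := fun n => star z * cfcₙ (g (εs n)) a with hW_def
  -- W is Cauchy
  have hW_cauchy : CauchySeq W := by
    apply cauchySeq_of_le_tendsto_0 (fun N => Real.sqrt (Real.sqrt (εs N)))
    · intro n m N hn hm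
      have hsub : W n - W m = star z * cfcₙ (fun t => g (εs n) t - g (εs m) t) a := by
        rw [cfcₙ_sub _ _ a ((hgc _ (hεpos n)).continuousOn) (hg0 _)
          ((hgc _ (hεpos m)).continuousOn) (hg0 _), mul_sub]
      rw [dist_eq_norm, hsub]
      apply norm_le_of_nnnorm_le_toNNReal (Real.sqrt_nonneg _)
      apply polar_aux1 z _ (((hgc _ (hεpos n))).sub (hgc _ (hεpos m)))
        (by simp [hg0]) _
      intro t ht'
      have ht : 0 ≤ t := hσ t ht'
      apply nnnorm_le_of_abs_le'
      have he1 : (g (εs n) t - g (εs m) t) * (t * (g (εs n) t - g (εs m) t))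
          = t * (g (εs n) t - g (εs m) t) ^ 2 := by ring
      rw [Pi.sub_apply, he1, abs_of_nonneg (mul_nonneg ht (sq_nonneg _))]
      have hc : ((Real.toNNReal (Real.sqrt (Real.sqrt (εs N))) ^ 2 : ℝ≥0) : ℝ)
          = Real.sqrt (εs N) := by
        push_cast [Real.coe_toNNReal _ (Real.sqrt_nonneg _)]
        exact Real.sq_sqrt (Real.sqrt_nonneg _)
      rw [hc]
      exact polar_keyA (εs n) (εs m) (εs N) t (hεpos n) (hεpos m) (hεanti hn) (hεanti hm) ht
    · exact hsqrtlim (hsqrtlim hεlim)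
  obtain ⟨w, hw⟩ := cauchySeq_tendsto_of_complete hW_cauchy
  -- the quarter power as a real cfcₙ
  have hq4 : CFC.nnrpow a (1/4 : ℝ≥0) = cfcₙ qf a := by
    show cfcₙ (NNReal.nnrpow · (1/4 : ℝ≥0)) a = cfcₙ qf a
    rw [cfcₙ_nnreal_eq_real _ _ ha]
    apply cfcₙ_congr
    intro t ht'
    have ht : 0 ≤ t := hσ t ht'
    show ((Real.toNNReal t ^ ((1/4 : ℝ≥0) : ℝ) : ℝ≥0) : ℝ) = qf t
    rw [NNReal.coe_rpow, Real.coe_toNNReal t ht]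
    have h14 : ((1/4 : ℝ≥0) : ℝ) = (1/2 : ℝ) * (1/2 : ℝ) := by norm_num
    rw [h14, Real.rpow_mul ht, ← Real.sqrt_eq_rpow, ← Real.sqrt_eq_rpow]
  set N4 : A := cfcₙ qf a with hN4_def
  -- W n * N4 tends to star z
  have hWN : ∀ n, W n * N4 = star z * cfcₙ (fun t => g (εs n) t * qf t) a := by
    intro n
    rw [hW_def, mul_assoc, hN4_def,
      ← cfcₙ_mul _ _ a ((hgc _ (hεpos n)).continuousOn) (hg0 _) hqfc.continuousOn hqf0]
  have hlim2 : Filter.Tendsto (fun n => W n * N4) Filter.atTop (nhds (star z)) := by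
    rw [tendsto_iff_norm_sub_tendsto_zero]
    apply squeeze_zero (fun n => norm_nonneg _) _ (hsqrtlim hεlim)
    intro n
    rw [hWN n]
    apply norm_le_of_nnnorm_le_toNNReal (Real.sqrt_nonneg _)
    apply polar_aux2 z _ ((hgc _ (hεpos n)).mul hqfc) (by simp [hg0, hqf0]) _
    intro t ht'
    have ht : 0 ≤ t := hσ t ht'
    apply nnnorm_le_of_abs_le'
    rw [abs_of_nonneg (mul_nonneg ht (sq_nonneg _))]
    have hc : ((Real.toNNReal (Real.sqrt (εs n)) ^ 2 : ℝ≥0) : ℝ) = εs n := by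
      push_cast [Real.coe_toNNReal _ (Real.sqrt_nonneg _)]
      exact Real.sq_sqrt (hεpos n).le
    rw [hc]
    exact polar_keyB (εs n) t (hεpos n) ht
  have hlim1 : Filter.Tendsto (fun n => W n * N4) Filter.atTop (nhds (w * N4)) :=
    hw.mul_const N4
  have hwN4 : w * N4 = star z := tendsto_nhds_unique hlim1 hlim2
  constructor
  · exact ⟨w, by rw [hq4]; exact hwN4.symm⟩
  · -- ideal part
    intro I hIc hzI
    set m : ℝ → ℝ → ℝ := fun ε t => max t 0 / (max t 0 + ε) ^ 2 with hm_def
    have hmc : ∀ ε : ℝ, 0 < ε → Continuous (m ε) := fun ε hε =>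
      (continuous_id.max continuous_const).div
        (((continuous_id.max continuous_const).add continuous_const).pow 2)
        (fun t => by positivity)
    have hm0 : ∀ ε : ℝ, 0 < ε → m ε 0 = 0 := fun ε hε => by
      simp [hm_def]
    have hVmem : ∀ n, star z * cfcₙ (fun t => t * m (εs n) t) a ∈ I := by
      intro n
      have hfac : cfcₙ (fun t : ℝ => t * m (εs n) t) a = a * cfcₙ (m (εs n)) a := by
        have h := cfcₙ_mul (id : ℝ → ℝ) (m (εs n)) a (by fun_prop) rfl
          ((hmc _ (hεpos n)).continuousOn) (hm0 _ (hεpos n))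
        have hid : IsSelfAdjoint a := .of_nonneg ha
        simpa [cfcₙ_id ℝ a] using h
      rw [hfac]
      exact I.mul_mem_left _ _ (I.mul_mem_right _ _ hzI)
    have hVlim : Filter.Tendsto (fun n => star z * cfcₙ (fun t => t * m (εs n) t) a)
        Filter.atTop (nhds (star z)) := by
      rw [tendsto_iff_norm_sub_tendsto_zero]
      apply squeeze_zero (fun n => norm_nonneg _) _
        (hsqrtlim (hεlim.const_mul 2 |>.congr (fun n => rfl) |>.mono_right le_rfl |>.trans_eq
          (by norm_num)))
      intro n
      apply norm_le_of_nnnorm_le_toNNReal (Real.sqrt_nonneg _)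
      apply polar_aux2 z _ (continuous_id.mul (hmc _ (hεpos n)))
        (by simp [hm0 _ (hεpos n)]) _
      intro t ht'
      have ht : 0 ≤ t := hσ t ht'
      apply nnnorm_le_of_abs_le'
      rw [abs_of_nonneg (mul_nonneg ht (sq_nonneg _))]
      have hc : ((Real.toNNReal (Real.sqrt (2 * εs n)) ^ 2 : ℝ≥0) : ℝ) = 2 * εs n := by
        push_cast [Real.coe_toNNReal _ (Real.sqrt_nonneg _)]
        exact Real.sq_sqrt (by positivity)
      rw [hc]
      exact polar_keyC (εs n) t (hεpos n) ht
    have hzmem : star z ∈ I := by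
      have := hIc.mem_of_tendsto hVlim (Filter.Eventually.of_forall fun n => hVmem n)
      simpa using this
    exact ⟨hzmem, I.mul_mem_right _ _ hzmem⟩
end

section
/- Let J be a σ-unital C*-algebra with approximate unit (eₖ) and D a unital C*-algebra (working in J† ⊗ D where J† is the unitization). Let y = z + 1 ⊗ d with z ∈ J ⊗ D and d ∈ D₊ non-zero. Then for every ε > 0 and n ∈ ℕ there exist k ≥ n and a positive contraction v ∈ J† ⊗ D with ‖v* y v − (1 − e_k) ⊗ d‖ < 2ε. -/
open Filter

section Aux

variable {J : Type*} [NonUnitalCStarAlgebra J] [PartialOrder J] [StarOrderedRing J]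

open scoped NNReal

private lemma aux_qspec {b : J} (hb : 0 ≤ b) (hb1 : ‖b‖ ≤ 1) :
    ∀ x ∈ quasispectrum ℝ b, 0 ≤ x ∧ x ≤ 1 := by
  intro x hx
  refine ⟨quasispectrum_nonneg_of_nonneg b hb x hx, ?_⟩
  refine (QuasispectrumRestricts.le_nnreal_iff
    (QuasispectrumRestricts.nnreal_of_nonneg hb) (r := 1)).mp ?_ x hx
  intro y hy
  calc (y : ℝ≥0) ≤ ‖b‖₊ := CStarAlgebra.le_nnnorm_of_mem_quasispectrum hy
    _ ≤ 1 := by rwa [← NNReal.coe_le_coe, coe_nnnorm, NNReal.coe_one]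

/-- At stage `b = e (k+1)`, `c = e k`: produce `F = 1 - (1-b)^{1/2}` together with its
"square root decompositions" `p, r` and the algebraic identities we need. -/
private lemma aux_J (b c : J) (hb : 0 ≤ b) (hb1 : ‖b‖ ≤ 1) (hc : 0 ≤ c) (hbc : b * c = c) :
    ∃ F p r : J, IsSelfAdjoint F ∧ IsSelfAdjoint p ∧ IsSelfAdjoint r ∧ ‖F‖ ≤ 1 ∧
      F + F - F * F = b ∧ p + p - p * p = F ∧ r * r = F ∧ F * c = c ∧ c * F = c := by
  have hq := aux_qspec hb hb1
  set g1 : ℝ → ℝ := fun x => 1 - Real.sqrt (1 - x) with hg1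
  set g2 : ℝ → ℝ := fun x => 1 - Real.sqrt (Real.sqrt (1 - x)) with hg2
  set g3 : ℝ → ℝ := fun x => Real.sqrt (1 - Real.sqrt (1 - x)) with hg3
  have hc1 : Continuous g1 := continuous_const.sub ((continuous_const.sub continuous_id).sqrt)
  have hc2 : Continuous g2 :=
    continuous_const.sub ((continuous_const.sub continuous_id).sqrt.sqrt)
  have hc3 : Continuous g3 :=
    (continuous_const.sub ((continuous_const.sub continuous_id).sqrt)).sqrt
  have h10 : g1 0 = 0 := by simp [hg1]
  have h20 : g2 0 = 0 := by simp [hg2]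
  have h30 : g3 0 = 0 := by simp [hg3]
  have hFsa : IsSelfAdjoint (cfcₙ g1 b) := cfcₙ_predicate _ b
  have hpsa : IsSelfAdjoint (cfcₙ g2 b) := cfcₙ_predicate _ b
  have hrsa : IsSelfAdjoint (cfcₙ g3 b) := cfcₙ_predicate _ b
  have hbsa : IsSelfAdjoint b := hb.isSelfAdjoint
  have hcsa : IsSelfAdjoint c := hc.isSelfAdjoint
  -- the key identity `F + F - F*F = b`
  have hFid : cfcₙ g1 b + cfcₙ g1 b - cfcₙ g1 b * cfcₙ g1 b = b := by
    rw [← cfcₙ_mul g1 g1 b (hc1.continuousOn) h10 (hc1.continuousOn) h10,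
        ← cfcₙ_add g1 g1 b (hc1.continuousOn) h10 (hc1.continuousOn) h10,
        ← cfcₙ_sub (fun x => g1 x + g1 x) (fun x => g1 x * g1 x) b ((hc1.add hc1).continuousOn) (by simp [h10])
          ((hc1.mul hc1).continuousOn) (by simp [h10])]
    calc cfcₙ (fun x => (g1 x + g1 x) - g1 x * g1 x) b = cfcₙ (fun x : ℝ => x) b := by
          apply cfcₙ_congr
          intro x hx
          obtain ⟨hx0, hx1⟩ := hq x hx
          have hs : Real.sqrt (1 - x) ^ 2 = 1 - x := Real.sq_sqrt (by linarith)
          simp only [hg1]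
          nlinarith [hs]
      _ = b := cfcₙ_id' ℝ b
  have hpid : cfcₙ g2 b + cfcₙ g2 b - cfcₙ g2 b * cfcₙ g2 b = cfcₙ g1 b := by
    rw [← cfcₙ_mul g2 g2 b (hc2.continuousOn) h20 (hc2.continuousOn) h20,
        ← cfcₙ_add g2 g2 b (hc2.continuousOn) h20 (hc2.continuousOn) h20,
        ← cfcₙ_sub (fun x => g2 x + g2 x) (fun x => g2 x * g2 x) b ((hc2.add hc2).continuousOn) (by simp [h20])
          ((hc2.mul hc2).continuousOn) (by simp [h20])]
    apply cfcₙ_congr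
    intro x _
    have hs : Real.sqrt (Real.sqrt (1 - x)) ^ 2 = Real.sqrt (1 - x) :=
      Real.sq_sqrt (Real.sqrt_nonneg _)
    simp only [hg1, hg2]
    nlinarith [hs]
  have hrid : cfcₙ g3 b * cfcₙ g3 b = cfcₙ g1 b := by
    rw [← cfcₙ_mul g3 g3 b (hc3.continuousOn) h30 (hc3.continuousOn) h30]
    apply cfcₙ_congr
    intro x hx
    obtain ⟨hx0, hx1⟩ := hq x hx
    have hg1nn : 0 ≤ g1 x := by
      simp only [hg1, sub_nonneg]
      exact Real.sqrt_le_one.mpr (by linarith)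
    simp only [hg3]
    exact Real.mul_self_sqrt hg1nn
  have hFnorm : ‖cfcₙ g1 b‖ ≤ 1 := by
    apply norm_cfcₙ_le
    intro x hx
    obtain ⟨hx0, hx1⟩ := hq x hx
    have h1 : 0 ≤ Real.sqrt (1 - x) := Real.sqrt_nonneg _
    have h2 : Real.sqrt (1 - x) ≤ 1 := Real.sqrt_le_one.mpr (by linarith)
    rw [Real.norm_eq_abs]
    simp only [hg1]
    rw [abs_le]
    constructor <;> linarith
  -- `F * c = c` and `c * F = c`
  have hcb : c * b = c := by
    have := congrArg star hbc
    rwa [star_mul, hbsa.star_eq, hcsa.star_eq] at this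
  have hFc : cfcₙ g1 b * c = c := by
    have key : star (c - cfcₙ g1 b * c) * (c - cfcₙ g1 b * c) = 0 := by
      have expand : star (c - cfcₙ g1 b * c) * (c - cfcₙ g1 b * c)
          = c * c - c * ((cfcₙ g1 b + cfcₙ g1 b - cfcₙ g1 b * cfcₙ g1 b) * c) := by
        rw [star_sub, hcsa.star_eq, star_mul, hFsa.star_eq, hcsa.star_eq]
        noncomm_ring
      rw [expand, hFid, hbc, sub_self]
    have hn : ‖c - cfcₙ g1 b * c‖ * ‖c - cfcₙ g1 b * c‖ = 0 := by
      rw [← CStarRing.norm_star_mul_self, key, norm_zero]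
    have h0 : c - cfcₙ g1 b * c = 0 := by
      rw [← norm_eq_zero]
      exact mul_self_eq_zero.mp hn
    have := sub_eq_zero.mp h0
    exact this.symm
  have hcF : c * cfcₙ g1 b = c := by
    have := congrArg star hFc
    rwa [star_mul, hFsa.star_eq, hcsa.star_eq] at this
  exact ⟨cfcₙ g1 b, cfcₙ g2 b, cfcₙ g3 b, hFsa, hpsa, hrsa, hFnorm, hFid, hpid, hrid, hFc, hcF⟩

end Aux

/-- For `y = z + 1 ⊗ d` in `J† ⊗ D` (`z ∈ J ⊗ D`, `d ∈ D₊` non-zero), every `ε > 0` and `n` admit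
`k ≥ n` and a positive contraction `v` with `‖v* y v − (1 − e_k) ⊗ d‖ < 2ε`.  The tensor product
is modelled by a unital C*-algebra `T` with a bilinear multiplicative star-preserving map
`m : J → D → T` on the ideal part and a unital embedding `ιD : D → T` giving the `1 ⊗ d` part. -/
theorem conjugate_to_corner_estimate
    (J D T : Type*) [NonUnitalCStarAlgebra J] [PartialOrder J] [StarOrderedRing J]
    [CStarAlgebra D] [PartialOrder D] [StarOrderedRing D]
    [CStarAlgebra T] [PartialOrder T] [StarOrderedRing T]
    (m : J → D → T) (ιD : D →⋆ₐ[ℂ] T)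
    (hm_addl : ∀ a b y, m (a + b) y = m a y + m b y)
    (hm_addr : ∀ a y z, m a (y + z) = m a y + m a z)
    (hm_mul : ∀ a b y z, m a y * m b z = m (a * b) (y * z))
    (hm_star : ∀ a y, star (m a y) = m (star a) (star y))
    (hm_norm : ∀ a y, ‖m a y‖ = ‖a‖ * ‖y‖)
    (hm_compl : ∀ a y d', m a y * ιD d' = m a (y * d'))
    (hm_compr : ∀ a y d', ιD d' * m a y = m a (d' * y))
    (e : ℕ → J) (hepos : ∀ k, 0 ≤ e k) (henorm : ∀ k, ‖e k‖ ≤ 1)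
    (heprod : ∀ k, e (k + 1) * e k = e k)
    (happrox : ∀ x : J, Filter.Tendsto (fun k => e k * x) Filter.atTop (nhds x))
    (z : T)
    (hz : z ∈ closure (Submodule.span ℂ (Set.range fun p : J × D => m p.1 p.2) : Set T))
    (d : D) (hd : 0 ≤ d) (hd0 : d ≠ 0) :
    ∀ ε > (0 : ℝ), ∀ n : ℕ, ∃ k ≥ n, ∃ v : T, 0 ≤ v ∧ ‖v‖ ≤ 1 ∧
      ‖star v * (z + ιD d) * v - (ιD d - m (e k) d)‖ < 2 * ε := by
  intro ε hε n
  -- elementary consequences of bilinearity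
  have m_sub : ∀ (a b : J) (y : D), m (a - b) y = m a y - m b y := by
    intro a b y
    have h := hm_addl b (a - b) y
    have hab : b + (a - b) = a := by abel
    rw [hab] at h
    rw [h]; abel
  have m_smul : ∀ (c : ℂ) (a : J) (y : D), m a (c • y) = c • m a y := by
    intro c a y
    calc m a (c • y) = m a (y * (c • (1 : D))) := by rw [mul_smul_comm, mul_one]
      _ = m a y * ιD (c • 1) := (hm_compl a y _).symm
      _ = c • m a y := by rw [map_smul, map_one, mul_smul_comm, mul_one]
  -- representation of span elements as list sums of elementary tensors
  have hrep : ∀ w ∈ (Submodule.span ℂ (Set.range fun p : J × D => m p.1 p.2)),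
      ∃ l : List (J × D), w = (l.map fun p => m p.1 p.2).sum := by
    intro w hw
    induction hw using Submodule.span_induction with
    | mem x hx => obtain ⟨p, rfl⟩ := hx; exact ⟨[p], by simp⟩
    | zero => exact ⟨[], by simp⟩
    | add x y _ _ hx hy =>
        obtain ⟨l1, rfl⟩ := hx; obtain ⟨l2, rfl⟩ := hy
        exact ⟨l1 ++ l2, by simp⟩
    | smul c x _ hx =>
        obtain ⟨l, rfl⟩ := hx
        refine ⟨l.map fun p => (p.1, c • p.2), ?_⟩
        rw [List.map_map, List.smul_sum, List.map_map]
        congr 1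
        apply List.map_congr_left
        intro p _
        simp only [Function.comp_apply]
        exact (m_smul c p.1 p.2).symm
  -- approximate `z` by a finite sum of elementary tensors
  obtain ⟨w, hwmem, hwz⟩ := Metric.mem_closure_iff.mp hz ε hε
  obtain ⟨l, hl⟩ := hrep w hwmem
  rw [dist_eq_norm] at hwz
  -- two-sided approximate unit facts
  have hesa : ∀ k, IsSelfAdjoint (e k) := fun k => (hepos k).isSelfAdjoint
  have happrox' : ∀ x : J, Tendsto (fun k => x * e k) atTop (nhds x) := by
    intro x
    have h := (happrox (star x)).star
    have heq : (fun k => star (e k * star x)) = fun k => x * e k := by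
      funext k; rw [star_mul, star_star, (hesa k).star_eq]
    rwa [heq, star_star] at h
  have hconv : ∀ a : J, Tendsto (fun k => ‖a - e k * a * e k‖) atTop (nhds 0) := by
    intro a
    have h1 : Tendsto (fun k => ‖a - e k * a‖) atTop (nhds 0) := by
      have := (tendsto_const_nhds (x := a) (f := atTop)).sub (happrox a)
      simpa using this.norm
    have h2 : Tendsto (fun k => ‖a - a * e k‖) atTop (nhds 0) := by
      have := (tendsto_const_nhds (x := a) (f := atTop)).sub (happrox' a)
      simpa using this.norm
    apply squeeze_zero (fun k => norm_nonneg _) (g := fun k => ‖a - e k * a‖ + ‖a - a * e k‖)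
    · intro k
      have heq : a - e k * a * e k = (a - e k * a) + e k * (a - a * e k) := by noncomm_ring
      rw [heq]
      refine (norm_add_le _ _).trans ?_
      have hm1 : ‖e k * (a - a * e k)‖ ≤ ‖a - a * e k‖ := by
        refine (norm_mul_le _ _).trans ?_
        nlinarith [henorm k, norm_nonneg (a - a * e k), norm_nonneg (e k)]
      linarith
    · simpa using h1.add h2
  -- construct `F k` etc. for every `k`
  choose F p r hFsa hpsa hrsa hFnorm hFid hpid hrid hFc hcF using
    fun k => aux_J (e (k + 1)) (e k) (hepos _) (henorm _) (hepos _) (heprod k)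
  -- norm bound for the compression map on `J`
  have hΦ : ∀ k (a : J), ‖a - F k * a - a * F k + F k * a * F k‖ ≤ 4 * ‖a - e k * a * e k‖ := by
    intro k a
    have h1 : F k * (e k * a * e k) = e k * a * e k := by
      calc F k * (e k * a * e k) = (F k * e k) * a * e k := by noncomm_ring
        _ = e k * a * e k := by rw [hFc k]
    have h2 : e k * a * e k * F k = e k * a * e k := by
      calc e k * a * e k * F k = e k * a * (e k * F k) := by noncomm_ring
        _ = e k * a * e k := by rw [hcF k]
    have h3 : F k * (e k * a * e k) * F k = e k * a * e k := by rw [h1, h2]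
    have hrw : a - F k * a - a * F k + F k * a * F k
        = (a - e k * a * e k) - F k * (a - e k * a * e k)
          - (a - e k * a * e k) * F k + F k * (a - e k * a * e k) * F k := by
      simp only [mul_sub, sub_mul, h1, h2, h3]
      abel
    rw [hrw]
    set b := a - e k * a * e k with hb
    have n1 : ‖F k * b‖ ≤ ‖b‖ := by
      refine (norm_mul_le _ _).trans ?_
      nlinarith [hFnorm k, norm_nonneg b, norm_nonneg (F k)]
    have n2 : ‖b * F k‖ ≤ ‖b‖ := by
      refine (norm_mul_le _ _).trans ?_
      nlinarith [hFnorm k, norm_nonneg b, norm_nonneg (F k)]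
    have n3 : ‖F k * b * F k‖ ≤ ‖b‖ := by
      refine (norm_mul_le _ _).trans ?_
      nlinarith [hFnorm k, norm_nonneg (F k), norm_nonneg (F k * b), n1]
    calc ‖b - F k * b - b * F k + F k * b * F k‖
        ≤ ‖b - F k * b - b * F k‖ + ‖F k * b * F k‖ := norm_add_le _ _
      _ ≤ (‖b - F k * b‖ + ‖b * F k‖) + ‖F k * b * F k‖ := by
          have := norm_sub_le (b - F k * b) (b * F k); linarith
      _ ≤ ((‖b‖ + ‖F k * b‖) + ‖b * F k‖) + ‖F k * b * F k‖ := by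
          have := norm_sub_le b (F k * b); linarith
      _ ≤ 4 * ‖b‖ := by linarith
  -- the sum of compression norms tends to 0
  have hsum0 : Tendsto
      (fun k => (l.map fun q => ‖q.1 - F k * q.1 - q.1 * F k + F k * q.1 * F k‖ * ‖q.2‖).sum)
      atTop (nhds 0) := by
    have key := tendsto_list_sum
      (f := fun (q : J × D) k => ‖q.1 - F k * q.1 - q.1 * F k + F k * q.1 * F k‖ * ‖q.2‖)
      (x := atTop) (a := fun _ => (0 : ℝ)) l ?_
    · simpa using key
    · intro q _
      apply squeeze_zero (fun k => by positivity)
        (g := fun k => 4 * ‖q.1 - e k * q.1 * e k‖ * ‖q.2‖)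
      · intro k
        exact mul_le_mul_of_nonneg_right (hΦ k q.1) (norm_nonneg _)
      · have := ((hconv q.1).const_mul 4).mul_const ‖q.2‖
        simpa using this
  obtain ⟨k₀, hk1, hk2⟩ :=
    ((hsum0.eventually (gt_mem_nhds hε)).and (eventually_ge_atTop n)).exists
  refine ⟨k₀ + 1, le_trans hk2 (Nat.le_succ k₀), ?_⟩
  -- construct `v`
  set u : T := m (F k₀) 1 with hu
  set v : T := 1 - u with hv
  have hmul1 : ∀ (x y : J), m x (1 : D) * m y (1 : D) = m (x * y) 1 := fun x y => by
    rw [hm_mul, one_mul]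
  have hstaru : star u = u := by rw [hu, hm_star, (hFsa k₀).star_eq, star_one]
  have hstarv : star v = v := by rw [hv, star_sub, star_one, hstaru]
  have hvpos : 0 ≤ v := by
    have hw : star ((1 : T) - m (p k₀) 1) * ((1 : T) - m (p k₀) 1) = v := by
      rw [star_sub, star_one, hm_star, (hpsa k₀).star_eq, star_one]
      have hexp : ((1 : T) - m (p k₀) 1) * ((1 : T) - m (p k₀) 1)
          = 1 - (m (p k₀) 1 + m (p k₀) 1 - m (p k₀) 1 * m (p k₀) 1) := by noncomm_ring
      rw [hexp, hmul1, ← hm_addl, ← m_sub, hpid k₀, hv, hu]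
    exact hw ▸ star_mul_self_nonneg _
  have hupos : 0 ≤ u := by
    have hw : star (m (r k₀) 1) * m (r k₀) 1 = u := by
      rw [hm_star, (hrsa k₀).star_eq, star_one, hmul1, hrid k₀, hu]
    exact hw ▸ star_mul_self_nonneg _
  have hvle1 : v ≤ 1 := by rw [hv]; simpa using sub_le_self (1 : T) hupos
  have hvnorm : ‖v‖ ≤ 1 := (CStarAlgebra.norm_le_one_iff_of_nonneg v hvpos).mpr hvle1
  -- conjugation identities
  have hconj : ∀ (a : J) (d' : D),
      v * m a d' * v = m (a - F k₀ * a - a * F k₀ + F k₀ * a * F k₀) d' := by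
    intro a d'
    have h1 : u * m a d' = m (F k₀ * a) d' := by rw [hu, hm_mul, one_mul]
    have h2 : m a d' * u = m (a * F k₀) d' := by rw [hu, hm_mul, mul_one]
    have h3 : u * m a d' * u = m (F k₀ * a * F k₀) d' := by rw [h1, hu, hm_mul, mul_one]
    have hexp : v * m a d' * v = m a d' - u * m a d' - m a d' * u + u * m a d' * u := by
      rw [hv]; noncomm_ring
    rw [hexp, h3, h1, h2]
    rw [show a - F k₀ * a - a * F k₀ + F k₀ * a * F k₀
      = (a - F k₀ * a - a * F k₀) + F k₀ * a * F k₀ from rfl, hm_addl, m_sub, m_sub]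
  have hconjd : v * ιD d * v = ιD d - m (e (k₀ + 1)) d := by
    have h1 : u * ιD d = m (F k₀) d := by rw [hu, hm_compl, one_mul]
    have h2 : ιD d * u = m (F k₀) d := by rw [hu, hm_compr, mul_one]
    have h3 : u * ιD d * u = m (F k₀ * F k₀) d := by rw [h1, hu, hm_mul, mul_one]
    have hexp : v * ιD d * v = ιD d - u * ιD d - ιD d * u + u * ιD d * u := by
      rw [hv]; noncomm_ring
    rw [hexp, h3, h1, h2, ← hFid k₀]
    rw [m_sub, hm_addl]
    abel
  refine ⟨v, hvpos, hvnorm, ?_⟩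
  have hmain : star v * (z + ιD d) * v - (ιD d - m (e (k₀ + 1)) d) = v * z * v := by
    rw [hstarv, mul_add, add_mul, hconjd]; abel
  rw [hmain]
  -- final estimate
  have hb2gen : ∀ l' : List (J × D),
      ‖v * (l'.map fun q => m q.1 q.2).sum * v‖
        ≤ (l'.map fun q => ‖q.1 - F k₀ * q.1 - q.1 * F k₀ + F k₀ * q.1 * F k₀‖ * ‖q.2‖).sum := by
    intro l'
    induction l' with
    | nil => simp
    | cons q t ih =>
        simp only [List.map_cons, List.sum_cons]
        have hsplit : v * (m q.1 q.2 + (t.map fun q => m q.1 q.2).sum) * v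
            = v * m q.1 q.2 * v + v * (t.map fun q => m q.1 q.2).sum * v := by noncomm_ring
        rw [hsplit]
        refine (norm_add_le _ _).trans ?_
        refine add_le_add (le_of_eq ?_) ih
        rw [hconj q.1 q.2, hm_norm]
  have hb1 : ‖v * (z - w) * v‖ ≤ ‖z - w‖ := by
    calc ‖v * (z - w) * v‖ ≤ ‖v * (z - w)‖ * ‖v‖ := norm_mul_le _ _
      _ ≤ (‖v‖ * ‖z - w‖) * ‖v‖ := by gcongr; exact norm_mul_le _ _
      _ ≤ (1 * ‖z - w‖) * 1 := by gcongr
      _ = ‖z - w‖ := by ring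
  have hb2 : ‖v * w * v‖
      ≤ (l.map fun q => ‖q.1 - F k₀ * q.1 - q.1 * F k₀ + F k₀ * q.1 * F k₀‖ * ‖q.2‖).sum := by
    rw [hl]; exact hb2gen l
  have hsplit : v * z * v = v * (z - w) * v + v * w * v := by noncomm_ring
  calc ‖v * z * v‖ = ‖v * (z - w) * v + v * w * v‖ := by rw [← hsplit]
    _ ≤ ‖v * (z - w) * v‖ + ‖v * w * v‖ := norm_add_le _ _
    _ < 2 * ε := by
        have := lt_of_le_of_lt hb1 hwz
        have := lt_of_le_of_lt hb2 hk1
        linarith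
end
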